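/- Let r be a positive real number such that 1, r, r², r³ are linearly independent over ℚ. Let Λ ⊂ ℂ² be the additive subgroup generated by (1,0), (0,1), (i·r³, r), (r, i). Then there is no 1-dimensional complex subspace L of ℂ² such that L ∩ Λ has rank 2 as an abelian group (equivalently, no complex line L of ℂ² yields a 1-dimensional complex subtorus L/(L∩Λ) of ℂ²/Λ). -/

import Mathlib

open Complex

lemma mem_closure4 {G : Type*} [AddCommGroup G] (v1 v2 v3 v4 : G) (x : G)
    (hx : x ∈ AddSubgroup.closure {v1, v2, v3, v4}) :
    ∃ a b c d : ℤ, x = a • v1 + b • v2 + c • v3 + d • v4 := by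
  induction hx using AddSubgroup.closure_induction with
  | mem y hy =>
    rcases hy with h | h | h | h
    · exact ⟨1, 0, 0, 0, by simp [h]⟩
    · exact ⟨0, 1, 0, 0, by simp [h]⟩
    · exact ⟨0, 0, 1, 0, by simp [h]⟩
    · exact ⟨0, 0, 0, 1, by simp [Set.eq_of_mem_singleton h]⟩
  | zero => exact ⟨0, 0, 0, 0, by simp⟩
  | add x y hx hy ihx ihy =>
    obtain ⟨a, b, c, d, rfl⟩ := ihx
    obtain ⟨a', b', c', d', rfl⟩ := ihy
    exact ⟨a + a', b + b', c + c', d + d', by module⟩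
  | neg x hx ihx =>
    obtain ⟨a, b, c, d, rfl⟩ := ihx
    exact ⟨-a, -b, -c, -d, by module⟩

theorem stmt_5 (r : ℝ) (hr : 0 < r)
    (hind : ∀ q0 q1 q2 q3 : ℚ,
      (q0 : ℝ) + q1 * r + q2 * r ^ 2 + q3 * r ^ 3 = 0 →
      q0 = 0 ∧ q1 = 0 ∧ q2 = 0 ∧ q3 = 0)
    (Λ : AddSubgroup (ℂ × ℂ))
    (hΛ : Λ = AddSubgroup.closure
      {((1 : ℂ), (0 : ℂ)), ((0 : ℂ), (1 : ℂ)),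
       ((I * (r : ℂ) ^ 3, (r : ℂ))), (((r : ℂ), I))}) :
    ¬ ∃ (v : ℂ × ℂ), v ≠ 0 ∧ ∃ μ ν : ℂ × ℂ,
      μ ∈ Λ ∧ ν ∈ Λ ∧ (∃ ζ : ℂ, μ = ζ • v) ∧ (∃ ζ : ℂ, ν = ζ • v) ∧
      (∀ m n : ℤ, m • μ + n • ν = 0 → m = 0 ∧ n = 0) := by
  rintro ⟨v, hv, μ, ν, hμ, hν, ⟨ζ, hζ⟩, ⟨ξ, hξ⟩, hindep⟩
  subst hΛ
  obtain ⟨a, b, c, d, hμeq⟩ := mem_closure4 _ _ _ _ _ hμ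
  obtain ⟨a', b', c', d', hνeq⟩ := mem_closure4 _ _ _ _ _ hν
  have hμ1 : μ.1 = (a : ℂ) + c * (I * (r:ℂ)^3) + d * (r:ℂ) := by
    rw [hμeq]; simp only [Prod.fst_add, Prod.smul_fst, zsmul_eq_mul, Prod.fst_mul, Prod.fst_intCast, Prod.fst_one, Prod.fst_zero]; push_cast; ring
  have hμ2 : μ.2 = (b : ℂ) + c * (r:ℂ) + d * I := by
    rw [hμeq]; simp only [Prod.snd_add, Prod.smul_snd, zsmul_eq_mul, Prod.snd_mul, Prod.snd_intCast, Prod.snd_one, Prod.snd_zero]; push_cast; ring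
  have hν1 : ν.1 = (a' : ℂ) + c' * (I * (r:ℂ)^3) + d' * (r:ℂ) := by
    rw [hνeq]; simp only [Prod.fst_add, Prod.smul_fst, zsmul_eq_mul, Prod.fst_mul, Prod.fst_intCast, Prod.fst_one, Prod.fst_zero]; push_cast; ring
  have hν2 : ν.2 = (b' : ℂ) + c' * (r:ℂ) + d' * I := by
    rw [hνeq]; simp only [Prod.snd_add, Prod.smul_snd, zsmul_eq_mul, Prod.snd_mul, Prod.snd_intCast, Prod.snd_one, Prod.snd_zero]; push_cast; ring
  have hdet : μ.1 * ν.2 - μ.2 * ν.1 = 0 := by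
    rw [hζ, hξ]
    simp only [Prod.smul_fst, Prod.smul_snd, smul_eq_mul]
    ring
  rw [hμ1, hμ2, hν1, hν2] at hdet
  simp only [Complex.ext_iff, Complex.add_re, Complex.add_im, Complex.mul_re,
    Complex.mul_im, Complex.I_re, Complex.I_im, Complex.ofReal_re, Complex.ofReal_im,
    Complex.intCast_re, Complex.intCast_im, Complex.sub_re, Complex.sub_im,
    Complex.zero_re, Complex.zero_im, ← Complex.ofReal_pow] at hdet
  ring_nf at hdet
  obtain ⟨hRe, hIm⟩ := hdet
  have h1 := hind ((a*b'-a'*b : ℤ) : ℚ) ((a*c'-a'*c+d*b'-b*d' : ℤ) : ℚ)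
      ((d*c'-c*d' : ℤ) : ℚ) ((d*c'-c*d' : ℤ) : ℚ) (by push_cast; linear_combination hRe)
  have h2 := hind ((a*d'-a'*d : ℤ) : ℚ) 0 0 ((b'*c-b*c' : ℤ) : ℚ)
      (by push_cast; linear_combination hIm)
  have e12 : a*b' - a'*b = 0 := by exact_mod_cast h1.1
  have eR : a*c' - a'*c + d*b' - b*d' = 0 := by exact_mod_cast h1.2.1
  have e34 : d*c' - c*d' = 0 := by exact_mod_cast h1.2.2.1
  have e14 : a*d' - a'*d = 0 := by exact_mod_cast h2.1
  have e23 : b'*c - b*c' = 0 := by exact_mod_cast h2.2.2.2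
  have key : (a*c' - a'*c) * (a*c' - a'*c) = 0 := by
    linear_combination -((d*c' - c*d') * e12) - (b'*c - b*c') * e14 + (a*c' - a'*c) * eR
  have e13 : a*c' - a'*c = 0 := by
    rcases mul_eq_zero.mp key with h | h <;> exact h
  have e24 : b*d' - b'*d = 0 := by linear_combination e13 - eR
  -- now produce an integer dependence between μ and ν
  have E12 : (a:ℂ)*b' - a'*b = 0 := by exact_mod_cast e12
  have E34 : (d:ℂ)*c' - c*d' = 0 := by exact_mod_cast e34
  have E14 : (a:ℂ)*d' - a'*d = 0 := by exact_mod_cast e14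
  have E23 : (b':ℂ)*c - b*c' = 0 := by exact_mod_cast e23
  have E13 : (a:ℂ)*c' - a'*c = 0 := by exact_mod_cast e13
  have E24 : (b:ℂ)*d' - b'*d = 0 := by exact_mod_cast e24
  have smul_pair : ∀ (m : ℤ) (p : ℂ × ℂ), m • p = ((m:ℂ) * p.1, (m:ℂ) * p.2) := by
    intro m p; ext <;> simp [Prod.smul_fst, Prod.smul_snd, zsmul_eq_mul]
  have dep : ∀ m n : ℤ, (m:ℂ)*μ.1 + n*ν.1 = 0 → (m:ℂ)*μ.2 + n*ν.2 = 0 →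
      m = 0 ∧ n = 0 := by
    intro m n h1' h2'
    apply hindep
    rw [smul_pair, smul_pair, Prod.mk_add_mk, Prod.mk.injEq]
    exact ⟨h1', h2'⟩
  rcases eq_or_ne a 0 with ha | ha
  case inr =>
    have := dep a' (-a)
      (by rw [hμ1, hν1]; push_cast; linear_combination -((I*(r:ℂ)^3) * E13) - (r:ℂ) * E14)
      (by rw [hμ2, hν2]; push_cast; linear_combination -E12 - (r:ℂ) * E13 - I * E14)
    exact ha (neg_eq_zero.mp this.2)
  rcases eq_or_ne b 0 with hb | hb
  case inr =>
    have := dep b' (-b)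
      (by rw [hμ1, hν1]; push_cast; linear_combination E12 + (I*(r:ℂ)^3) * E23 - (r:ℂ) * E24)
      (by rw [hμ2, hν2]; push_cast; linear_combination (r:ℂ) * E23 - I * E24)
    exact hb (neg_eq_zero.mp this.2)
  rcases eq_or_ne c 0 with hc | hc
  case inr =>
    have := dep c' (-c)
      (by rw [hμ1, hν1]; push_cast; linear_combination E13 + (r:ℂ) * E34)
      (by rw [hμ2, hν2]; push_cast; linear_combination -E23 + I * E34)
    exact hc (neg_eq_zero.mp this.2)
  rcases eq_or_ne d 0 with hd | hd
  case inr =>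
    have := dep d' (-d)
      (by rw [hμ1, hν1]; push_cast; linear_combination E14 - (I*(r:ℂ)^3) * E34)
      (by rw [hμ2, hν2]; push_cast; linear_combination E24 - (r:ℂ) * E34)
    exact hd (neg_eq_zero.mp this.2)
  -- all coefficients zero: μ = 0
  have hμ0 : μ = 0 := by rw [hμeq, ha, hb, hc, hd]; simp
  have := hindep 1 0 (by rw [hμ0]; simp)
  exact one_ne_zero this.1
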